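/- Let G be a group with a faithful self-similar action on X* where X is an infinite alphabet, and let S be the associated inverse hull (with non-zero elements u g v*, u, v ∈ X*, g ∈ G). Then the universal groupoid of S is effective if and only if the only element g ∈ G that strongly fixes a cofinite subset of the letters of X is the identity. -/

import Mathlib

/-- A self-similar action of a group `G` on the free monoid on the alphabet `X`:
an action on letters together with restrictions `g|_x`, satisfying the self-similarity
axioms. -/
structure SelfSimilarAction (G X : Type*) [Group G] where
  act : G → X → X
  res : G → X → G
  act_one : ∀ x, act 1 x = x
  act_mul : ∀ g h x, act (g * h) x = act g (act h x)
  res_one : ∀ x, res 1 x = 1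
  res_mul : ∀ g h x, res (g * h) x = res g (act h x) * res h x

namespace SelfSimilarAction

variable {G X : Type*} [Group G] (σ : SelfSimilarAction G X)

/-- The induced action of `g ∈ G` on finite words. -/
def actW (g : G) : List X → List X
  | [] => []
  | x :: u => σ.act g x :: actW (σ.res g x) u

/-- The restriction `g|_w` of `g ∈ G` at a finite word `w`. -/
def resW (g : G) : List X → G
  | [] => g
  | x :: u => resW (σ.res g x) u

/-- A word `w` is strongly fixed by `g` if `g(w) = w` and `g|_w = 1`. -/
def SFix (g : G) (w : List X) : Prop := σ.actW g w = w ∧ σ.resW g w = 1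

/-- The self-similar action is faithful: `G` acts faithfully on `X*`. -/
def Faithful : Prop := ∀ g : G, (∀ w : List X, σ.actW g w = w) → g = 1

end SelfSimilarAction

/-- The space `X* ∪ X^ω` of finite and (right-)infinite words over `X`. -/
abbrev Words (X : Type*) := List X ⊕ (ℕ → X)

/-- Prepend a finite word to a finite or infinite word. -/
def prep {X : Type*} (w : List X) (p : Words X) : Words X :=
  match p with
  | .inl u => .inl (w ++ u)
  | .inr ω => .inr fun n => if h : n < w.length then w.get ⟨n, h⟩ else ω (n - w.length)

/-- The cylinder set of finite and infinite words starting with `w`. -/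
def cyl {X : Type*} (w : List X) : Set (Words X) := {p | ∃ q, p = prep w q}

/-- The topology on `X* ∪ X^ω` generated by the cylinder sets and their complements. -/
def wordsTop (X : Type*) : TopologicalSpace (Words X) :=
  TopologicalSpace.generateFrom
    ({s | ∃ w : List X, s = cyl w} ∪ {s | ∃ w : List X, s = (cyl w)ᶜ})

namespace SelfSimilarAction

variable {G X : Type*} [Group G] (σ : SelfSimilarAction G X)

/-- The action of `g ∈ G` on infinite words. -/
def actInf (g : G) (ω : ℕ → X) : ℕ → X :=
  fun n => σ.act (σ.resW g (List.ofFn fun i : Fin n => ω i)) (ω n)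

/-- The action of `g ∈ G` on finite and infinite words. -/
def actP (g : G) (p : Words X) : Words X :=
  match p with
  | .inl u => .inl (σ.actW g u)
  | .inr ω => .inr (σ.actInf g ω)

/-- Germ equivalence for the universal groupoid of the inverse hull `S` of the
self-similar action: `((u,g,v), ω)` represents the germ of `u g v*` at the point `vω`,
and two such quadruples are equivalent iff they have the same source point and admit a
common restriction defined at that point. -/
def germRel (a b : (List X × G × List X) × Words X) : Prop :=
  prep a.1.2.2 a.2 = prep b.1.2.2 b.2 ∧
  ∃ (r r' : List X) (q : Words X),
    a.2 = prep r q ∧ b.2 = prep r' q ∧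
    a.1.2.2 ++ r = b.1.2.2 ++ r' ∧
    a.1.1 ++ σ.actW a.1.2.1 r = b.1.1 ++ σ.actW b.1.2.1 r' ∧
    σ.resW a.1.2.1 r = σ.resW b.1.2.1 r'

/-- The arrows of the universal groupoid `G(S)`: germs `[u g v*, vω]`. -/
def Arr := Quot σ.germRel

/-- The germ of `u g v*` at the point `vω`. -/
def germ (u : List X) (g : G) (v : List X) (ω : Words X) : σ.Arr :=
  Quot.mk σ.germRel ((u, g, v), ω)

/-- The unit space of `G(S)`: the germs of idempotents `w w*`. -/
def unitSet : Set σ.Arr :=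
  {a | ∃ (w : List X) (ω : Words X), a = σ.germ w 1 w ω}

/-- The isotropy subgroupoid of `G(S)`: the germs whose source equals their range. -/
def isoSet : Set σ.Arr :=
  {a | ∃ (u : List X) (g : G) (v : List X) (ω : Words X),
        a = σ.germ u g v ω ∧ prep v ω = prep u (σ.actP g ω)}

/-- The set of germs of `u g v*` at the points of `V`. -/
def germSet (u : List X) (g : G) (v : List X) (V : Set (Words X)) : Set σ.Arr :=
  {a | ∃ ω : Words X, prep v ω ∈ V ∧ a = σ.germ u g v ω}

/-- The germ topology on the arrows of `G(S)`, generated by the basic (compact) local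
bisections `(u g v*, V)` with `V` open in `X* ∪ X^ω`. -/
def arrTop : TopologicalSpace σ.Arr :=
  TopologicalSpace.generateFrom
    {s | ∃ (u : List X) (g : G) (v : List X) (V : Set (Words X)),
        (wordsTop X).IsOpen V ∧ s = σ.germSet u g v V}

end SelfSimilarAction
section AuxWords

variable {X : Type*}

theorem prep_nil (p : Words X) : prep [] p = p := by
  cases p with
  | inl u => rfl
  | inr ω =>
    simp only [prep, Sum.inr.injEq]
    funext n
    simp

theorem prep_append (s t : List X) (q : Words X) :
    prep (s ++ t) q = prep s (prep t q) := by
  cases q with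
  | inl u => simp [prep]
  | inr ω =>
    simp only [prep]
    congr 1
    funext n
    rcases lt_or_ge n s.length with h | h
    · rw [dif_pos (by simp only [List.length_append]; omega), dif_pos h]
      simp [List.getElem_append_left h]
    · rcases lt_or_ge n (s.length + t.length) with h2 | h2
      · rw [dif_pos (by simp only [List.length_append]; omega), dif_neg (by omega), dif_pos (by omega)]
        simp [List.getElem_append_right h]
      · rw [dif_neg (by simp only [List.length_append]; omega), dif_neg (by omega), dif_neg (by omega)]
        congr 1
        simp
        omega

theorem prep_inj (w : List X) {p p' : Words X} (h : prep w p = prep w p') : p = p' := by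
  cases p with
  | inl u =>
    cases p' with
    | inl u' =>
      simp only [prep, Sum.inl.injEq] at h
      exact congrArg Sum.inl (List.append_cancel_left h)
    | inr => simp [prep] at h
  | inr ω =>
    cases p' with
    | inl => simp [prep] at h
    | inr ω' =>
      simp only [prep, Sum.inr.injEq] at h
      congr 1
      funext n
      have e := congrFun h (n + w.length)
      rw [dif_neg (by omega), dif_neg (by omega)] at e
      simpa using e

/-- The `n`-th letter of a finite or infinite word. -/
def letterAt (p : Words X) (n : ℕ) : Option X :=
  match p with
  | .inl u => u[n]?
  | .inr ω => some (ω n)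

theorem letterAt_prep (s : List X) (p : Words X) {n : ℕ} (h : n < s.length) :
    letterAt (prep s p) n = some s[n] := by
  cases p with
  | inl u => simp [letterAt, prep, List.getElem?_append_left h]
  | inr ω => simp [letterAt, prep, h]

theorem prefix_of_prep_eq {s t : List X} {p p' : Words X}
    (h : prep s p = prep t p') (hle : s.length ≤ t.length) : s <+: t := by
  rw [List.prefix_iff_eq_take]
  apply List.ext_getElem (by simp [hle])
  intro n h1 h2
  have hn : n < s.length := h1
  have e : (some s[n] : Option X) = some (t[n]'(lt_of_lt_of_le hn hle)) := by
    rw [← letterAt_prep s p hn, h, letterAt_prep t p' (lt_of_lt_of_le hn hle)]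
  have e' : s[n] = t[n]'(lt_of_lt_of_le hn hle) := Option.some.inj e
  simp only [List.getElem_take]
  exact e'

theorem prep_comparable {s t : List X} {p p' : Words X}
    (h : prep s p = prep t p') : s <+: t ∨ t <+: s := by
  rcases le_total s.length t.length with hle | hle
  · exact Or.inl (prefix_of_prep_eq h hle)
  · exact Or.inr (prefix_of_prep_eq h.symm hle)

theorem prep_eq_of_prefix {s d : List X} {p p' : Words X}
    (h : prep s p = prep (s ++ d) p') : p = prep d p' :=
  prep_inj s (h.trans (prep_append s d p'))

theorem inl_mem_cyl {w u : List X} : (Sum.inl u : Words X) ∈ cyl w ↔ w <+: u := by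
  constructor
  · rintro ⟨q, hq⟩
    cases q with
    | inl s =>
      refine ⟨s, ?_⟩
      simpa [prep] using hq.symm
    | inr => simp [prep] at hq
  · rintro ⟨d, rfl⟩
    exact ⟨Sum.inl d, rfl⟩

theorem cyl_anti {w w' : List X} (h : w <+: w') : cyl w' ⊆ cyl w := by
  rintro p ⟨q, rfl⟩
  obtain ⟨d, rfl⟩ := h
  exact ⟨prep d q, prep_append w d q⟩

theorem prep_mem_cyl (w d : List X) (q : Words X) : prep (w ++ d) q ∈ cyl w :=
  ⟨prep d q, prep_append w d q⟩

theorem prefix_of_prefix_append {t v l : List X} (h : t <+: v ++ l)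
    (hlen : t.length ≤ v.length) : t <+: v := by
  obtain ⟨d, hd⟩ := h
  have h1 : t = (v ++ l).take t.length := by
    rw [← hd, List.take_left]
  rw [List.take_append_of_le_length hlen] at h1
  rw [h1]
  exact List.take_prefix _ _

theorem getElem?_of_prefix {t l : List X} (h : t <+: l) {n : ℕ} (hn : n < t.length) :
    l[n]? = some t[n] := by
  obtain ⟨d, rfl⟩ := h
  rw [List.getElem?_append_left hn, List.getElem?_eq_getElem hn]

end AuxWords
namespace SelfSimilarAction

variable {G X : Type*} [Group G] (σ : SelfSimilarAction G X)

theorem actW_one : ∀ u : List X, σ.actW 1 u = u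
  | [] => rfl
  | x :: u => by rw [actW, σ.act_one, σ.res_one, actW_one u]

theorem resW_one : ∀ u : List X, σ.resW 1 u = 1
  | [] => rfl
  | x :: u => by rw [resW, σ.res_one, resW_one u]

theorem actW_append (g : G) (s t : List X) :
    σ.actW g (s ++ t) = σ.actW g s ++ σ.actW (σ.resW g s) t := by
  induction s generalizing g with
  | nil => rfl
  | cons x s ih => simp [actW, resW, ih]

theorem resW_append (g : G) (s t : List X) :
    σ.resW g (s ++ t) = σ.resW (σ.resW g s) t := by
  induction s generalizing g with
  | nil => rfl
  | cons x s ih => simp [resW, ih]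

theorem actW_length (g : G) (u : List X) : (σ.actW g u).length = u.length := by
  induction u generalizing g with
  | nil => rfl
  | cons x u ih => simp [actW, ih]

theorem actW_getElem (g : G) (u : List X) (n : ℕ) (h : n < u.length) :
    (σ.actW g u)[n]'(by rw [σ.actW_length]; exact h) =
      σ.act (σ.resW g (u.take n)) u[n] := by
  induction u generalizing g n with
  | nil => simp at h
  | cons x u ih =>
    cases n with
    | zero => simp [actW, resW]
    | succ n => simpa [actW, resW] using ih (σ.res g x) n (by simpa using h)

theorem actP_one (p : Words X) : σ.actP 1 p = p := by
  cases p with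
  | inl u => simp [actP, actW_one]
  | inr ω =>
    simp only [actP, Sum.inr.injEq]
    funext n
    simp [actInf, resW_one, σ.act_one]

theorem actP_prep (g : G) (r : List X) (q : Words X) :
    σ.actP g (prep r q) = prep (σ.actW g r) (σ.actP (σ.resW g r) q) := by
  cases q with
  | inl u => simp [actP, prep, actW_append]
  | inr ω =>
    simp only [actP, prep, Sum.inr.injEq]
    funext n
    rcases lt_or_ge n r.length with h | h
    · rw [dif_pos (by rw [σ.actW_length]; exact h)]
      rw [actInf]
      have h1 : (List.ofFn fun i : Fin n =>
          if h : (i : ℕ) < r.length then r.get ⟨i, h⟩ else ω ((i : ℕ) - r.length)) = r.take n := by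
        apply List.ext_getElem (by simp; omega)
        intro m hm1 hm2
        simp only [List.getElem_ofFn, List.getElem_take]
        rw [dif_pos (by simp at hm1; omega)]
        simp
      rw [h1, dif_pos h]
      simp only [List.get_eq_getElem]
      rw [σ.actW_getElem g r n h]
    · rw [dif_neg (by rw [σ.actW_length]; omega)]
      rw [actInf, actInf]
      have h1 : (List.ofFn fun i : Fin n =>
          if h : (i : ℕ) < r.length then r.get ⟨i, h⟩ else ω ((i : ℕ) - r.length)) =
          r ++ List.ofFn (fun i : Fin (n - r.length) => ω i) := by
        apply List.ext_getElem (by simp; omega)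
        intro m hm1 hm2
        simp only [List.getElem_ofFn]
        rcases lt_or_ge m r.length with hm | hm
        · rw [dif_pos hm, List.getElem_append_left hm]
          simp
        · rw [dif_neg (by omega), List.getElem_append_right hm]
          simp
      rw [h1, σ.resW_append, σ.actW_length]
      rw [dif_neg (by omega)]

theorem germRel_refl (a : (List X × G × List X) × Words X) : σ.germRel a a :=
  ⟨rfl, [], [], a.2, (prep_nil a.2).symm, (prep_nil a.2).symm, rfl, rfl, rfl⟩

theorem germRel_symm {a b : (List X × G × List X) × Words X} (h : σ.germRel a b) :
    σ.germRel b a := by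
  obtain ⟨h1, r, r', q, ha, hb, hv, hu, hres⟩ := h
  exact ⟨h1.symm, r', r, q, hb, ha, hv.symm, hu.symm, hres.symm⟩

theorem germRel_trans {a b c : (List X × G × List X) × Words X}
    (hab : σ.germRel a b) (hbc : σ.germRel b c) : σ.germRel a c := by
  obtain ⟨h1, r1, r1', q1, ha2, hb2, hv, hu, hres⟩ := hab
  obtain ⟨h1', r2, r2', q2, hb2', hc2, hv', hu', hres'⟩ := hbc
  have hcomp : prep r1' q1 = prep r2 q2 := hb2.symm.trans hb2'
  refine ⟨h1.trans h1', ?_⟩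
  rcases prep_comparable hcomp with hp | hp
  · obtain ⟨d, hd⟩ := hp
    have hq1 : q1 = prep d q2 := prep_eq_of_prefix (by rw [hd]; exact hcomp)
    refine ⟨r1 ++ d, r2', q2, ?_, hc2, ?_, ?_, ?_⟩
    · rw [ha2, hq1, prep_append]
    · rw [← List.append_assoc, hv, List.append_assoc, hd, hv']
    · rw [σ.actW_append, ← List.append_assoc, hu, hres, List.append_assoc,
        ← σ.actW_append, hd, hu']
    · rw [σ.resW_append, hres, ← σ.resW_append, hd, hres']
  · obtain ⟨d, hd⟩ := hp
    have hq2 : q2 = prep d q1 := prep_eq_of_prefix (by rw [hd]; exact hcomp.symm)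
    refine ⟨r1, r2' ++ d, q1, ha2, ?_, ?_, ?_, ?_⟩
    · rw [hc2, hq2, prep_append]
    · rw [hv, ← hd, ← List.append_assoc, hv', List.append_assoc]
    · rw [hu, ← hd, σ.actW_append, ← List.append_assoc, hu', hres',
        List.append_assoc, ← σ.actW_append]
    · rw [hres, ← hd, σ.resW_append, hres', ← σ.resW_append]

theorem germRel_equiv : Equivalence σ.germRel :=
  ⟨σ.germRel_refl, σ.germRel_symm, σ.germRel_trans⟩

theorem germ_eq_iff {u v u' v' : List X} {g g' : G} {ω ω' : Words X} :
    σ.germ u g v ω = σ.germ u' g' v' ω' ↔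
      (prep v ω = prep v' ω' ∧ ∃ (r r' : List X) (q : Words X),
        ω = prep r q ∧ ω' = prep r' q ∧ v ++ r = v' ++ r' ∧
        u ++ σ.actW g r = u' ++ σ.actW g' r' ∧ σ.resW g r = σ.resW g' r') := by
  show @Eq (Quot σ.germRel) (Quot.mk _ _) (Quot.mk _ _) ↔ _
  rw [Quot.eq]
  exact σ.germRel_equiv.eqvGen_iff

theorem germ_restrict (u : List X) (g : G) (v r : List X) (q : Words X) :
    σ.germ u g v (prep r q) = σ.germ (u ++ σ.actW g r) (σ.resW g r) (v ++ r) q :=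
  Quot.sound ⟨(prep_append v r q).symm, r, [], q, rfl, (prep_nil q).symm,
    by simp, by simp [actW], by simp [resW]⟩

def src : σ.Arr → Words X := Quot.lift (fun a => prep a.1.2.2 a.2) (fun _ _ h => h.1)

theorem rng_aux {a b : (List X × G × List X) × Words X} (h : σ.germRel a b) :
    prep a.1.1 (σ.actP a.1.2.1 a.2) = prep b.1.1 (σ.actP b.1.2.1 b.2) := by
  obtain ⟨h1, r, r', q, ha2, hb2, hv, hu, hres⟩ := h
  rw [ha2, hb2, σ.actP_prep, σ.actP_prep, ← prep_append, ← prep_append, hu, hres]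

def rng : σ.Arr → Words X :=
  Quot.lift (fun a => prep a.1.1 (σ.actP a.1.2.1 a.2)) (fun _ _ h => σ.rng_aux h)

theorem mem_isoSet_iff {a : σ.Arr} : a ∈ σ.isoSet ↔ σ.src a = σ.rng a := by
  constructor
  · rintro ⟨u, g, v, ω, rfl, h⟩
    exact h
  · intro h
    obtain ⟨⟨⟨u, g, v⟩, ω⟩, rfl⟩ := Quot.exists_rep a
    exact ⟨u, g, v, ω, rfl, h⟩

end SelfSimilarAction
section AuxTop

variable {X : Type*}

/-- Basic open sets of `X* ∪ X^ω`: a cylinder minus finitely many cylinders. -/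
def basicW (w : List X) (T : Finset (List X)) : Set (Words X) :=
  cyl w ∩ ⋂ t ∈ T, (cyl t)ᶜ

theorem mem_basicW {p : Words X} {w : List X} {T : Finset (List X)} :
    p ∈ basicW w T ↔ p ∈ cyl w ∧ ∀ t ∈ T, p ∉ cyl t := by
  simp [basicW]

theorem basicW_anti {w₁ w₂ : List X} {T₁ T₂ : Finset (List X)}
    (hw : w₁ <+: w₂) (hT : T₁ ⊆ T₂) : basicW w₂ T₂ ⊆ basicW w₁ T₁ := by
  intro p hp
  rw [mem_basicW] at hp ⊢
  exact ⟨cyl_anti hw hp.1, fun t ht => hp.2 t (hT ht)⟩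

theorem isOpen_basicW (w : List X) (T : Finset (List X)) :
    (wordsTop X).IsOpen (basicW w T) := by
  letI := wordsTop X
  refine IsOpen.inter ?_ (isOpen_biInter_finset fun t _ => ?_)
  · exact TopologicalSpace.GenerateOpen.basic _ (Or.inl ⟨w, rfl⟩)
  · exact TopologicalSpace.GenerateOpen.basic _ (Or.inr ⟨t, rfl⟩)

theorem wordsBasis {V : Set (Words X)} (hV : (wordsTop X).IsOpen V) :
    ∀ p ∈ V, ∃ w T, p ∈ basicW w T ∧ basicW w T ⊆ V := by
  classical
  have hV' : TopologicalSpace.GenerateOpen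
      ({s | ∃ w : List X, s = cyl w} ∪ {s | ∃ w : List X, s = (cyl w)ᶜ}) V := hV
  clear hV
  induction hV' with
  | basic s hs =>
    intro p hp
    rcases hs with ⟨w, rfl⟩ | ⟨w, rfl⟩
    · exact ⟨w, ∅, mem_basicW.mpr ⟨hp, by simp⟩, fun x hx => (mem_basicW.mp hx).1⟩
    · refine ⟨[], {w}, mem_basicW.mpr ⟨⟨p, (prep_nil p).symm⟩, by simpa using hp⟩, ?_⟩
      intro x hx
      simpa using (mem_basicW.mp hx).2 w (Finset.mem_singleton_self w)
  | univ =>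
    intro p _
    exact ⟨[], ∅, mem_basicW.mpr ⟨⟨p, (prep_nil p).symm⟩, by simp⟩, Set.subset_univ _⟩
  | inter s₁ s₂ h₁ h₂ ih₁ ih₂ =>
    intro p hp
    obtain ⟨w₁, T₁, hm₁, hsub₁⟩ := ih₁ p hp.1
    obtain ⟨w₂, T₂, hm₂, hsub₂⟩ := ih₂ p hp.2
    obtain ⟨q₁, hq₁⟩ := (mem_basicW.mp hm₁).1
    obtain ⟨q₂, hq₂⟩ := (mem_basicW.mp hm₂).1
    rcases prep_comparable (hq₁.symm.trans hq₂) with hc | hc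
    · refine ⟨w₂, T₁ ∪ T₂,
        mem_basicW.mpr ⟨(mem_basicW.mp hm₂).1, fun t ht => ?_⟩, fun x hx => ?_⟩
      · rcases Finset.mem_union.mp ht with ht | ht
        · exact (mem_basicW.mp hm₁).2 t ht
        · exact (mem_basicW.mp hm₂).2 t ht
      · exact ⟨hsub₁ (basicW_anti hc Finset.subset_union_left hx),
          hsub₂ (basicW_anti (List.prefix_refl w₂) Finset.subset_union_right hx)⟩
    · refine ⟨w₁, T₁ ∪ T₂,
        mem_basicW.mpr ⟨(mem_basicW.mp hm₁).1, fun t ht => ?_⟩, fun x hx => ?_⟩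
      · rcases Finset.mem_union.mp ht with ht | ht
        · exact (mem_basicW.mp hm₁).2 t ht
        · exact (mem_basicW.mp hm₂).2 t ht
      · exact ⟨hsub₁ (basicW_anti (List.prefix_refl w₁) Finset.subset_union_left hx),
          hsub₂ (basicW_anti hc Finset.subset_union_right hx)⟩
  | sUnion S hS ih =>
    rintro p ⟨s, hsS, hps⟩
    obtain ⟨w, T, h1, h2⟩ := ih s hsS p hps
    exact ⟨w, T, h1, h2.trans (Set.subset_sUnion_of_mem hsS)⟩

end AuxTop

namespace SelfSimilarAction

variable {G X : Type*} [Group G] (σ : SelfSimilarAction G X)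

theorem arrBasis {O : Set σ.Arr} (hO : σ.arrTop.IsOpen O) :
    ∀ a ∈ O, ∃ u g v V, (wordsTop X).IsOpen V ∧
      a ∈ σ.germSet u g v V ∧ σ.germSet u g v V ⊆ O := by
  have hO' : TopologicalSpace.GenerateOpen
      {s | ∃ (u : List X) (g : G) (v : List X) (V : Set (Words X)),
        (wordsTop X).IsOpen V ∧ s = σ.germSet u g v V} O := hO
  clear hO
  induction hO' with
  | basic s hs =>
    intro a ha
    obtain ⟨u, g, v, V, hVopen, rfl⟩ := hs
    exact ⟨u, g, v, V, hVopen, ha, subset_rfl⟩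
  | univ =>
    intro a _
    obtain ⟨⟨⟨u, g, v⟩, ω⟩, rfl⟩ := Quot.exists_rep a
    exact ⟨u, g, v, Set.univ, TopologicalSpace.GenerateOpen.univ,
      ⟨ω, trivial, rfl⟩, Set.subset_univ _⟩
  | inter s₁ s₂ h₁ h₂ ih₁ ih₂ =>
    intro a ha
    have ha1 := ha.1
    have ha2 := ha.2
    obtain ⟨u₁, g₁, v₁, V₁, hV₁, ⟨ω₁, hω₁, rfl⟩, hsub₁⟩ := ih₁ a ha1
    obtain ⟨u₂, g₂, v₂, V₂, hV₂, ⟨ω₂, hω₂, heq⟩, hsub₂⟩ := ih₂ _ ha2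
    obtain ⟨h1, r, r', q, hωr, hωr', hv, hu, hres⟩ := σ.germ_eq_iff.mp heq
    refine ⟨u₁ ++ σ.actW g₁ r, σ.resW g₁ r, v₁ ++ r, V₁ ∩ V₂,
      TopologicalSpace.GenerateOpen.inter _ _ hV₁ hV₂, ⟨q, ?_, ?_⟩, ?_⟩
    · rw [prep_append, ← hωr]
      refine ⟨hω₁, ?_⟩
      rw [h1]
      exact hω₂
    · rw [hωr]
      exact σ.germ_restrict u₁ g₁ v₁ r q
    · rintro x ⟨q', hq', rfl⟩
      constructor
      · refine hsub₁ ⟨prep r q', ?_, (σ.germ_restrict u₁ g₁ v₁ r q').symm⟩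
        rw [← prep_append]
        exact hq'.1
      · have e : σ.germ u₂ g₂ v₂ (prep r' q') =
            σ.germ (u₁ ++ σ.actW g₁ r) (σ.resW g₁ r) (v₁ ++ r) q' := by
          rw [σ.germ_restrict, ← hu, ← hres, ← hv]
        refine hsub₂ ⟨prep r' q', ?_, e.symm⟩
        rw [← prep_append, ← hv]
        exact hq'.2
  | sUnion S hS ih =>
    rintro a ⟨s, hsS, has⟩
    obtain ⟨u, g, v, V, h0, h1, h2⟩ := ih s hsS a has
    exact ⟨u, g, v, V, h0, h1, h2.trans (Set.subset_sUnion_of_mem hsS)⟩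

end SelfSimilarAction

open SelfSimilarAction in
/-- For a faithful self-similar action of a group `G` on `X*` with `X` infinite, the
universal groupoid of the associated inverse hull is effective (the interior of its
isotropy subgroupoid equals its unit space) iff the only element of `G` strongly fixing
a cofinite set of letters of `X` is the identity. -/
theorem stmt18 {G X : Type*} [Group G] [Infinite X]
    (σ : SelfSimilarAction G X) (hfaith : σ.Faithful) :
    @interior _ σ.arrTop σ.isoSet = σ.unitSet ↔
      ∀ g : G, ({x : X | σ.act g x = x ∧ σ.res g x = 1}ᶜ).Finite → g = 1 := by
  classical
  letI : TopologicalSpace σ.Arr := σ.arrTop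
  constructor
  · -- Effective implies the strong-fixing condition.
    intro hEq g hfin
    set V : Set (Words X) := ⋂ x ∈ hfin.toFinset, (cyl [x])ᶜ with hV
    have hVopen : (wordsTop X).IsOpen V := by
      letI := wordsTop X
      exact isOpen_biInter_finset fun x _ =>
        TopologicalSpace.GenerateOpen.basic _ (Or.inr ⟨[x], rfl⟩)
    have hsub : σ.germSet [] g [] V ⊆ σ.isoSet := by
      rintro _ ⟨ω, hω, rfl⟩
      refine ⟨[], g, [], ω, rfl, ?_⟩
      rw [prep_nil] at hω
      rw [prep_nil, prep_nil]
      cases ω with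
      | inl l =>
        cases l with
        | nil => rfl
        | cons x s =>
          have hx : σ.act g x = x ∧ σ.res g x = 1 := by
            by_contra hxc
            have hxF : x ∈ hfin.toFinset := by
              rw [Set.Finite.mem_toFinset]
              exact hxc
            exact (Set.mem_iInter₂.mp hω x hxF) (inl_mem_cyl.mpr ⟨s, rfl⟩)
          show Sum.inl (x :: s) = σ.actP g (Sum.inl (x :: s))
          simp only [actP, actW, hx.1, hx.2, σ.actW_one]
      | inr f =>
        have hx : σ.act g (f 0) = f 0 ∧ σ.res g (f 0) = 1 := by
          by_contra hxc
          have hxF : f 0 ∈ hfin.toFinset := by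
            rw [Set.Finite.mem_toFinset]
            exact hxc
          refine (Set.mem_iInter₂.mp hω _ hxF) ?_
          refine ⟨Sum.inr fun n => f (n + 1), ?_⟩
          simp only [prep, Sum.inr.injEq]
          funext n
          cases n with
          | zero => simp
          | succ m => simp
        show Sum.inr f = σ.actP g (Sum.inr f)
        simp only [actP, Sum.inr.injEq]
        funext n
        rw [actInf]
        cases n with
        | zero =>
          rw [show (List.ofFn fun i : Fin 0 => f i) = [] from List.ofFn_zero]
          exact hx.1.symm
        | succ m =>
          rw [List.ofFn_succ, resW]
          simp only [Fin.val_zero]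
          rw [hx.2, σ.resW_one, σ.act_one]
    have hmem : σ.germ [] g [] (Sum.inl []) ∈ σ.unitSet := by
      rw [← hEq]
      refine interior_maximal hsub
        (TopologicalSpace.GenerateOpen.basic _ ⟨[], g, [], V, hVopen, rfl⟩)
        ⟨Sum.inl [], ?_, rfl⟩
      rw [prep_nil]
      refine Set.mem_iInter₂.mpr fun x hx => ?_
      intro hcyl
      obtain ⟨q, hq⟩ := hcyl
      cases q with
      | inl s => simp [prep] at hq
      | inr => simp [prep] at hq
    obtain ⟨w, ω', hw⟩ := hmem
    obtain ⟨h1, r, r', q, h2, h3, h4, h5, h6⟩ := σ.germ_eq_iff.mp hw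
    cases q with
    | inl s =>
      have h2' : r ++ s = [] := by simpa [prep] using h2.symm
      have hr : r = [] := (List.append_eq_nil_iff.mp h2').1
      rw [hr, σ.resW_one] at h6
      exact h6
    | inr => simp [prep] at h2
  · -- The strong-fixing condition implies effectiveness.
    intro H
    apply Set.Subset.antisymm
    · intro a ha
      obtain ⟨O, hOsub, hOopen, haO⟩ := mem_interior.mp ha
      obtain ⟨u, g, v, V, hVopen, ⟨ω, hω, rfl⟩, hsub⟩ := σ.arrBasis hOopen a haO
      have hiso : ∀ ω', prep v ω' ∈ V → prep v ω' = prep u (σ.actP g ω') := fun ω' h =>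
        σ.mem_isoSet_iff.mp (hOsub (hsub ⟨ω', h, rfl⟩))
      obtain ⟨w, T, hpB, hBsub⟩ := wordsBasis hVopen _ hω
      obtain ⟨qq, hqq⟩ := (mem_basicW.mp hpB).1
      obtain ⟨r, q, hωr, hwpre⟩ : ∃ r q, ω = prep r q ∧ w <+: v ++ r := by
        rcases prep_comparable hqq with hvw | hwv
        · obtain ⟨d, hd⟩ := hvw
          refine ⟨d, qq, prep_eq_of_prefix (by rw [hd]; exact hqq), ?_⟩
          rw [← hd]
        · exact ⟨[], ω, (prep_nil ω).symm, by simpa using hwv⟩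
      set v' := v ++ r with hv'
      set u' := u ++ σ.actW g r with hu'
      set g' := σ.resW g r with hg'
      have hgerm : σ.germ u g v ω = σ.germ u' g' v' q := by
        rw [hωr]; exact σ.germ_restrict u g v r q
      have key : ∀ q', prep v' q' ∈ basicW w T → prep v' q' = prep u' (σ.actP g' q') := by
        intro q' hq'
        have h := hiso (prep r q') (by rw [← prep_append]; exact hBsub hq')
        rw [← prep_append, σ.actP_prep, ← prep_append] at h
        exact h
      have hnpre : ∀ t ∈ T, ¬ t <+: v' := by
        intro t ht hpre
        have h0 : prep v ω ∉ cyl t := (mem_basicW.mp hpB).2 t ht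
        refine h0 ?_
        rw [hωr, ← prep_append]
        exact cyl_anti hpre ⟨q, rfl⟩
      set Y : Set X := {y | ∃ t ∈ T, t[v'.length]? = some y} with hY
      have hYfin : Y.Finite := by
        have hsubY : Y ⊆ ⋃ t ∈ (T : Finset (List X)), {y : X | t[v'.length]? = some y} := by
          rintro y ⟨t, ht, hty⟩
          exact Set.mem_biUnion ht hty
        refine Set.Finite.subset (Set.Finite.biUnion T.finite_toSet fun t _ => ?_) hsubY
        apply Set.Subsingleton.finite
        intro y hy z hz
        rw [Set.mem_setOf_eq] at hy hz
        exact Option.some.inj (hy.symm.trans hz)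
      have havoid : ∀ l : List X, (∀ x s, l = x :: s → x ∉ Y) →
          prep v' (Sum.inl l) ∈ basicW w T := by
        intro l hl
        rw [mem_basicW]
        constructor
        · obtain ⟨d, hd⟩ := hwpre
          exact ⟨prep d (Sum.inl l), by rw [← hd, prep_append]⟩
        · intro t ht htc
          have hpre : t <+: v' ++ l := inl_mem_cyl.mp htc
          rcases le_or_gt t.length v'.length with hlen | hlen
          · exact hnpre t ht (prefix_of_prefix_append hpre hlen)
          · cases l with
            | nil =>
              have hle := hpre.length_le
              simp at hle
              omega
            | cons x s =>
              have hx : (v' ++ x :: s)[v'.length]? = some x := by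
                rw [List.getElem?_append_right (le_refl _)]
                simp
              have hlen' : v'.length < t.length := hlen
              have h1 := getElem?_of_prefix hpre hlen'
              have hxt : t[v'.length]? = some x := by
                rw [List.getElem?_eq_getElem hlen']
                exact congrArg some (Option.some.inj (hx.symm.trans h1)).symm
              exact hl x s rfl ⟨t, ht, hxt⟩
      have huv : u' = v' := by
        have h := key (Sum.inl []) (havoid [] (by intro x s h; cases h))
        have h' : v' ++ ([] : List X) = u' ++ σ.actW g' [] := by
          simpa [prep, actP] using h
        simpa [actW] using h'.symm
      have hfix : ∀ x : X, x ∉ Y → σ.act g' x = x ∧ σ.res g' x = 1 := by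
        intro x hx
        have hact : ∀ s : List X, σ.actW g' (x :: s) = x :: s := by
          intro s
          have h := key (Sum.inl (x :: s)) (havoid (x :: s) ?_)
          · have h' : v' ++ x :: s = u' ++ σ.actW g' (x :: s) := by
              simpa [prep, actP] using h
            rw [huv] at h'
            exact (List.append_cancel_left h').symm
          · rintro y t he
            injection he with he1 he2
            exact he1 ▸ hx
        have h0 := hact []
        rw [actW] at h0
        injection h0 with ha1 ha2
        refine ⟨ha1, hfaith _ ?_⟩
        intro s
        have hs := hact s
        rw [actW] at hs
        rw [List.cons.injEq] at hs
        exact hs.2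
      have hg1 : g' = 1 := by
        refine H g' (hYfin.subset ?_)
        intro x hx
        by_contra hxY
        exact hx (hfix x hxY)
      exact ⟨v', q, by rw [hgerm, huv, hg1]⟩
    · rintro a ⟨w, ω, rfl⟩
      refine interior_maximal (t := σ.germSet w 1 w Set.univ) ?_ ?_ ⟨ω, trivial, rfl⟩
      · rintro _ ⟨ω', _, rfl⟩
        exact ⟨w, 1, w, ω', rfl, by rw [σ.actP_one]⟩
      · exact TopologicalSpace.GenerateOpen.basic _
          ⟨w, 1, w, Set.univ, TopologicalSpace.GenerateOpen.univ, rfl⟩
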